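/- Let ν > 0, m > 0, c > 0 and C₀ > 0 be real numbers, and set β = (ν+1)/m and θ_* = (c·m/(ν+1))^{−1/m}. Then there exist T₀ ∈ (0, e^{−1}) and C₁ > 0, depending only on ν, m, c and C₀, such that for every T ∈ (0, T₀] the following holds. Suppose θ : [0,T) → (0, ∞) is differentiable and, writing L(t) = log(1/(T−t)), satisfies for all t ∈ [0,T): |θ'(t) + c·θ(t)^{1+m}·(T−t)^{−1}·L(t)^{ν}| ≤ C₀·θ(t)^{1+m}·(T−t)^{−1}·L(t)^{ν−1/2}, and additionally |θ(0)^{−m} − (c·m/(ν+1))·L(0)^{ν+1}| ≤ C₀·L(0)^{ν+1/2}. Then for all t ∈ [0,T): |θ(t) − θ_*·L(t)^{−β}| ≤ C₁·L(t)^{−β−1/2}. -/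

import Mathlib

open Real Set

private lemma mvt_pow (m Km : ℝ) (hm : 0 < m) (hKm : Km = (1/m) * (2:ℝ) ^ (1/m + 1)) :
    ∀ e ∈ Icc (-(1/2) : ℝ) (1/2), |(1+e) ^ (-(1/m) : ℝ) - 1| ≤ Km * |e| := by
  intro e he
  set p : ℝ := -(1/m) with hp
  have hp0 : p < 0 := by
    rw [hp]; simp; positivity
  have hder : ∀ x ∈ Icc (-(1/2) : ℝ) (1/2),
      HasDerivWithinAt (fun x => (1+x) ^ p) (1 * p * (1+x) ^ (p-1)) (Icc (-(1/2) : ℝ) (1/2)) x := by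
    intro x hx
    have h1x : (0:ℝ) < 1 + x := by
      have := hx.1; simp at this ⊢; linarith
    exact (((hasDerivAt_id x).const_add 1).rpow_const (Or.inl (ne_of_gt h1x))).hasDerivWithinAt
  have hbound : ∀ x ∈ Icc (-(1/2) : ℝ) (1/2), ‖1 * p * (1+x) ^ (p-1)‖ ≤ Km := by
    intro x hx
    have h1x : (1/2:ℝ) ≤ 1 + x := by have := hx.1; linarith
    have h1x0 : (0:ℝ) < 1 + x := by linarith
    have hle : (1+x) ^ (p-1) ≤ (1/2 : ℝ) ^ (p-1) :=
      Real.rpow_le_rpow_of_nonpos (by norm_num) h1x (by linarith)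
    have heq : (1/2 : ℝ) ^ (p-1) = (2:ℝ) ^ (1/m + 1) := by
      rw [show ((1:ℝ)/2) = 2⁻¹ by norm_num, Real.inv_rpow (by norm_num), ← Real.rpow_neg (by norm_num)]
      congr 1
      rw [hp]; ring
    rw [Real.norm_eq_abs, abs_mul, abs_mul, abs_one, one_mul, abs_of_pos (Real.rpow_pos_of_pos h1x0 _),
      abs_of_neg hp0, hKm]
    have : -p = 1/m := by rw [hp]; ring
    rw [this]
    have h1m : (0:ℝ) < 1/m := by positivity
    calc 1/m * (1+x) ^ (p-1) ≤ 1/m * ((1/2:ℝ) ^ (p-1)) := by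
          exact mul_le_mul_of_nonneg_left hle h1m.le
      _ = 1/m * (2:ℝ) ^ (1/m + 1) := by rw [heq]
  have h0 : (0:ℝ) ∈ Icc (-(1/2) : ℝ) (1/2) := by norm_num
  have := (convex_Icc (-(1/2):ℝ) (1/2)).norm_image_sub_le_of_norm_hasDerivWithin_le hder hbound h0 he
  simpa [Real.norm_eq_abs, Real.one_rpow] using this

private lemma invlem (m A C₂ Km ν : ℝ) (hm : 0 < m) (hA : 0 < A) (hC₂ : 0 < C₂)
    (hKm : Km = (1/m) * (2:ℝ) ^ (1/m + 1)) (x y : ℝ) (hx : 0 < x) (hy : 1 ≤ y)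
    (hsmall : C₂ * y ^ (-(1/2) : ℝ) ≤ A/2)
    (hclose : |x - A * y ^ (ν+1)| ≤ C₂ * y ^ (ν + 1/2)) :
    |x ^ (-(1/m) : ℝ) - A ^ (-(1/m) : ℝ) * y ^ (-((ν+1)/m))|
      ≤ (A ^ (-(1/m) : ℝ) * Km * (C₂/A)) * y ^ (-((ν+1)/m) - 1/2) := by
  have hy0 : (0:ℝ) < y := lt_of_lt_of_le one_pos hy
  have hyq : (0:ℝ) < y ^ (ν+1) := Real.rpow_pos_of_pos hy0 _
  set D : ℝ := A * y ^ (ν+1) with hD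
  have hD0 : 0 < D := mul_pos hA hyq
  set ε : ℝ := x / D - 1 with hε
  have hxeq : x = D * (1 + ε) := by
    rw [hε]; field_simp; ring
  clear_value D ε
  have hsplit : y ^ (ν + 1/2) = y ^ (ν+1) * y ^ (-(1/2) : ℝ) := by
    rw [show ν + 1/2 = (ν+1) + (-(1/2)) by ring, Real.rpow_add hy0]
  have hεb : |ε| ≤ (C₂/A) * y ^ (-(1/2) : ℝ) := by
    have : ε = (x - D) / D := by rw [hε]; field_simp
    rw [this, abs_div, abs_of_pos hD0, div_le_iff₀ hD0]
    calc |x - D| ≤ C₂ * y ^ (ν + 1/2) := hclose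
      _ = (C₂/A) * y ^ (-(1/2):ℝ) * D := by rw [hsplit, hD]; field_simp
  have hε2 : |ε| ≤ 1/2 := by
    have h1 : (C₂/A) * y ^ (-(1/2):ℝ) ≤ 1/2 := by
      rw [div_mul_eq_mul_div, div_le_iff₀ hA]
      linarith
    linarith
  obtain ⟨hεl, hεr⟩ := abs_le.1 hε2
  have h1ε : (0:ℝ) < 1 + ε := by linarith
  have hmvt := mvt_pow m Km hm hKm ε ⟨hεl, hεr⟩
  have hKm0 : 0 < Km := by rw [hKm]; positivity
  have hAp : (0:ℝ) < A ^ (-(1/m) : ℝ) := Real.rpow_pos_of_pos hA _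
  have hyp : (0:ℝ) < y ^ (-((ν+1)/m)) := Real.rpow_pos_of_pos hy0 _
  have hxp : x ^ (-(1/m) : ℝ) = A ^ (-(1/m):ℝ) * y ^ (-((ν+1)/m)) * (1+ε) ^ (-(1/m):ℝ) := by
    rw [hxeq, Real.mul_rpow hD0.le h1ε.le, hD, Real.mul_rpow hA.le hyq.le,
      ← Real.rpow_mul hy0.le, show (ν+1)*(-(1/m)) = -((ν+1)/m) from by ring]
  calc |x ^ (-(1/m) : ℝ) - A ^ (-(1/m):ℝ) * y ^ (-((ν+1)/m))|
      = A ^ (-(1/m):ℝ) * y ^ (-((ν+1)/m)) * |(1+ε) ^ (-(1/m):ℝ) - 1| := by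
        rw [hxp, ← mul_sub_one, abs_mul, abs_of_pos (mul_pos hAp hyp)]
    _ ≤ A ^ (-(1/m):ℝ) * y ^ (-((ν+1)/m)) * (Km * |ε|) :=
        mul_le_mul_of_nonneg_left hmvt (mul_pos hAp hyp).le
    _ ≤ A ^ (-(1/m):ℝ) * y ^ (-((ν+1)/m)) * (Km * ((C₂/A) * y ^ (-(1/2) : ℝ))) := by
        have := mul_le_mul_of_nonneg_left hεb hKm0.le
        exact mul_le_mul_of_nonneg_left this (mul_pos hAp hyp).le
    _ = (A ^ (-(1/m) : ℝ) * Km * (C₂/A)) * (y ^ (-((ν+1)/m)) * y ^ (-(1/2):ℝ)) := by ring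
    _ = (A ^ (-(1/m) : ℝ) * Km * (C₂/A)) * y ^ (-((ν+1)/m) - 1/2) := by
        rw [← Real.rpow_add hy0, show -((ν+1)/m) + -(1/2) = -((ν+1)/m) - 1/2 from by ring]

private lemma hasDerivAt_logL {T t : ℝ} (h : t < T) :
    HasDerivAt (fun s => Real.log (1/(T-s))) ((T-t)⁻¹) t := by
  have heq : (fun s : ℝ => Real.log (1/(T-s))) = fun s => -Real.log (T-s) := by
    funext s; rw [one_div, Real.log_inv]
  rw [heq]
  have h1 : HasDerivAt (fun s : ℝ => T - s) (-1) t := (hasDerivAt_id t).const_sub T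
  have h2 := (h1.log (ne_of_gt (sub_pos.2 h))).neg
  rw [show (T-t)⁻¹ = -(-1/(T-t)) by ring]
  exact h2

private lemma hasDerivAt_Lp {T t p : ℝ} (h : t < T) (hne : Real.log (1/(T-t)) ≠ 0) :
    HasDerivAt (fun s => Real.log (1/(T-s)) ^ p)
      ((T-t)⁻¹ * p * Real.log (1/(T-t)) ^ (p-1)) t :=
  (hasDerivAt_logL h).rpow_const (Or.inl hne)

theorem stmt11 (ν m c C₀ : ℝ) (hν : 0 < ν) (hm : 0 < m) (hc : 0 < c) (hC₀ : 0 < C₀) :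
    ∃ T₀ ∈ Set.Ioo (0 : ℝ) (Real.exp (-1)), ∃ C₁ > (0 : ℝ),
      ∀ T ∈ Set.Ioc (0 : ℝ) T₀, ∀ θ θ' : ℝ → ℝ,
        (∀ t ∈ Set.Ico (0 : ℝ) T, 0 < θ t) →
        (∀ t ∈ Set.Ico (0 : ℝ) T, HasDerivWithinAt θ (θ' t) (Set.Ico 0 T) t) →
        (∀ t ∈ Set.Ico (0 : ℝ) T,
          |θ' t + c * θ t ^ (1 + m) * (T - t)⁻¹ * Real.log (1 / (T - t)) ^ ν|
            ≤ C₀ * θ t ^ (1 + m) * (T - t)⁻¹ * Real.log (1 / (T - t)) ^ (ν - 1 / 2)) →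
        |θ 0 ^ (-m) - (c * m / (ν + 1)) * Real.log (1 / T) ^ (ν + 1)|
          ≤ C₀ * Real.log (1 / T) ^ (ν + 1 / 2) →
        ∀ t ∈ Set.Ico (0 : ℝ) T,
          |θ t - (c * m / (ν + 1)) ^ (-(1 / m)) * Real.log (1 / (T - t)) ^ (-((ν + 1) / m))|
            ≤ C₁ * Real.log (1 / (T - t)) ^ (-((ν + 1) / m) - 1 / 2) := by
  have hν1 : (0:ℝ) < ν + 1 := by linarith
  have hν2 : (0:ℝ) < ν + 1/2 := by linarith
  set A : ℝ := c * m / (ν + 1) with hA_def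
  have hA : 0 < A := div_pos (mul_pos hc hm) hν1
  set Kc : ℝ := m * C₀ / (ν + 1/2) with hKc_def
  have hKcpos : 0 < Kc := div_pos (mul_pos hm hC₀) hν2
  set C₂ : ℝ := C₀ + Kc with hC₂_def
  have hC₂ : 0 < C₂ := by linarith
  set Km : ℝ := (1/m) * (2:ℝ) ^ (1/m + 1) with hKm_def
  have hKm0 : 0 < Km := by rw [hKm_def]; positivity
  set C₁ : ℝ := A ^ (-(1/m) : ℝ) * Km * (C₂ / A) with hC₁_def
  set M : ℝ := max 2 ((2 * C₂ / A) ^ 2) with hM_def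
  have hM2 : (2:ℝ) ≤ M := le_max_left _ _
  refine ⟨Real.exp (-M), ⟨Real.exp_pos _, Real.exp_lt_exp.2 (by linarith)⟩, C₁, ?_, ?_⟩
  · exact mul_pos (mul_pos (Real.rpow_pos_of_pos hA _) hKm0) (div_pos hC₂ hA)
  intro T hT θ θ' hθpos hθD hode hinit t ht
  obtain ⟨hT0, hTle⟩ := hT
  -- L is large on [0,T)
  have hL : ∀ s ∈ Set.Ico (0:ℝ) T, M ≤ Real.log (1/(T-s)) := by
    intro s hs
    have hs1 : 0 < T - s := sub_pos.2 hs.2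
    have hs2 : T - s ≤ Real.exp (-M) := by
      have := hs.1; linarith
    rw [one_div, Real.log_inv]
    have h3 := Real.log_le_log hs1 hs2
    rw [Real.log_exp] at h3
    linarith
  have hLt := hL t ht
  have hL1 : 1 ≤ Real.log (1/(T-t)) := by linarith
  have hTt : 0 < T - t := sub_pos.2 ht.2
  have hLpos : ∀ s ∈ Set.Ico (0:ℝ) T, (0:ℝ) < Real.log (1/(T-s)) := by
    intro s hs; linarith [hL s hs]
  -- the functions F and g
  set F : ℝ → ℝ := fun s => θ s ^ (-m) - A * Real.log (1/(T-s)) ^ (ν+1) with hF_def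
  set g : ℝ → ℝ := fun s => Kc * Real.log (1/(T-s)) ^ (ν+1/2) with hg_def
  -- continuity
  have hθc : ContinuousOn θ (Set.Ico 0 T) := fun s hs => (hθD s hs).continuousWithinAt
  have hTs : ∀ s ∈ Set.Ico (0:ℝ) T, (0:ℝ) < T - s := fun s hs => sub_pos.2 hs.2
  have hLc : ContinuousOn (fun s => Real.log (1/(T-s))) (Set.Ico 0 T) := by
    apply ContinuousOn.log
    · exact continuousOn_const.div (continuousOn_const.sub (continuousOn_id)) fun s hs => (hTs s hs).ne'
    · intro s hs
      have := hTs s hs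
      positivity
  have hFc : ContinuousOn F (Set.Ico 0 T) := by
    apply ContinuousOn.sub
    · exact hθc.rpow_const fun s hs => Or.inl (hθpos s hs).ne'
    · exact continuousOn_const.mul (hLc.rpow_const fun s hs => Or.inl (hLpos s hs).ne')
  have hgc : ContinuousOn g (Set.Ico 0 T) :=
    continuousOn_const.mul (hLc.rpow_const fun s hs => Or.inl (hLpos s hs).ne')
  -- derivatives on the interior
  have hFd : ∀ s ∈ Set.Ioo (0:ℝ) T, HasDerivAt F
      (θ' s * (-m) * θ s ^ (-m-1) - A * ((T-s)⁻¹ * (ν+1) * Real.log (1/(T-s)) ^ ν)) s := by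
    intro s hs
    have hsI : s ∈ Set.Ico (0:ℝ) T := ⟨hs.1.le, hs.2⟩
    have hθs := (hθD s hsI).hasDerivAt (Ico_mem_nhds hs.1 hs.2)
    have h1 : HasDerivAt (fun u => θ u ^ (-m)) (θ' s * (-m) * θ s ^ (-m-1)) s :=
      hθs.rpow_const (Or.inl (hθpos s hsI).ne')
    have h2 : HasDerivAt (fun u => Real.log (1/(T-u)) ^ (ν+1))
        ((T-s)⁻¹ * (ν+1) * Real.log (1/(T-s)) ^ ν) s := by
      have h3 := hasDerivAt_Lp (T := T) (t := s) (p := ν+1) hs.2 (hLpos s hsI).ne'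
      rw [show ν + 1 - 1 = ν from by ring] at h3
      exact h3
    exact h1.sub (h2.const_mul A)
  have hgd : ∀ s ∈ Set.Ioo (0:ℝ) T, HasDerivAt g
      (Kc * ((T-s)⁻¹ * (ν+1/2) * Real.log (1/(T-s)) ^ (ν-1/2))) s := by
    intro s hs
    have hsI : s ∈ Set.Ico (0:ℝ) T := ⟨hs.1.le, hs.2⟩
    have h3 := (hasDerivAt_Lp (T := T) (t := s) (p := ν+1/2) hs.2 (hLpos s hsI).ne').const_mul Kc
    rw [show ν + 1/2 - 1 = ν - 1/2 from by ring] at h3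
    exact h3
  -- nonnegativity of the derivatives of g ∓ F
  have hnn : ∀ s ∈ Set.Ioo (0:ℝ) T,
      0 ≤ Kc * ((T-s)⁻¹ * (ν+1/2) * Real.log (1/(T-s)) ^ (ν-1/2))
          - (θ' s * (-m) * θ s ^ (-m-1) - A * ((T-s)⁻¹ * (ν+1) * Real.log (1/(T-s)) ^ ν)) ∧
      0 ≤ Kc * ((T-s)⁻¹ * (ν+1/2) * Real.log (1/(T-s)) ^ (ν-1/2))
          + (θ' s * (-m) * θ s ^ (-m-1) - A * ((T-s)⁻¹ * (ν+1) * Real.log (1/(T-s)) ^ ν)) := by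
    intro s hs
    have hsI : s ∈ Set.Ico (0:ℝ) T := ⟨hs.1.le, hs.2⟩
    have hθs := hθpos s hsI
    set P : ℝ := θ s ^ (-m-1) with hP_def
    set Q : ℝ := θ s ^ (1+m) with hQ_def
    set τ : ℝ := (T-s)⁻¹ with hτ_def
    set R : ℝ := Real.log (1/(T-s)) ^ (ν-1/2) with hR_def
    set S : ℝ := Real.log (1/(T-s)) ^ ν with hS_def
    have hP : 0 < P := Real.rpow_pos_of_pos hθs _
    have hQ : 0 < Q := Real.rpow_pos_of_pos hθs _
    have hτ : 0 < τ := inv_pos.2 (sub_pos.2 hs.2)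
    have hR : 0 < R := Real.rpow_pos_of_pos (hLpos s hsI) _
    have hS : 0 < S := Real.rpow_pos_of_pos (hLpos s hsI) _
    have hPQ : P * Q = 1 := by
      rw [hP_def, hQ_def, ← Real.rpow_add hθs, show -m-1+(1+m) = 0 from by ring, Real.rpow_zero]
    clear_value P Q τ R S
    obtain ⟨hlo, hhi⟩ := abs_le.1 (hode s hsI)
    have hKcE : Kc * (ν+1/2) = m * C₀ := by rw [hKc_def]; field_simp
    have hAE : A * (ν+1) = c * m := by rw [hA_def]; field_simp
    have hmP : (0:ℝ) ≤ m * P := (mul_pos hm hP).le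
    have h1 := mul_le_mul_of_nonneg_left hlo hmP
    have h2 := mul_le_mul_of_nonneg_left hhi hmP
    rw [← hQ_def, ← hτ_def, ← hR_def, ← hS_def] at h1 h2
    have e1 : (m*P) * (-(C₀ * Q * τ * R)) = -(m*C₀*τ*R) := by
      linear_combination (-(m*C₀*τ*R)) * hPQ
    have e2 : (m*P) * (θ' s + c * Q * τ * S) = m*P*θ' s + c*m*τ*S := by
      linear_combination (c*m*τ*S) * hPQ
    have e2' : (m*P) * (C₀ * Q * τ * R) = m*C₀*τ*R := by
      linear_combination (m*C₀*τ*R) * hPQ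
    have e3 : Kc * (τ*(ν+1/2)*R) = m*C₀*τ*R := by linear_combination (τ*R) * hKcE
    have e4 : A * (τ*(ν+1)*S) = c*m*τ*S := by linear_combination (τ*S) * hAE
    constructor
    · linarith [h1, e1, e2, e3, e4]
    · linarith [h2, e2, e2', e3, e4]
  -- monotonicity
  have mono1 : MonotoneOn (fun u => g u - F u) (Set.Ico 0 T) := by
    apply monotoneOn_of_hasDerivWithinAt_nonneg (convex_Ico 0 T) (hgc.sub hFc)
      (f' := fun s => Kc * ((T-s)⁻¹ * (ν+1/2) * Real.log (1/(T-s)) ^ (ν-1/2))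
          - (θ' s * (-m) * θ s ^ (-m-1) - A * ((T-s)⁻¹ * (ν+1) * Real.log (1/(T-s)) ^ ν)))
    · intro s hs
      rw [interior_Ico] at hs
      exact ((hgd s hs).sub (hFd s hs)).hasDerivWithinAt
    · intro s hs
      rw [interior_Ico] at hs
      exact (hnn s hs).1
  have mono2 : MonotoneOn (fun u => g u + F u) (Set.Ico 0 T) := by
    apply monotoneOn_of_hasDerivWithinAt_nonneg (convex_Ico 0 T) (hgc.add hFc)
      (f' := fun s => Kc * ((T-s)⁻¹ * (ν+1/2) * Real.log (1/(T-s)) ^ (ν-1/2))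
          + (θ' s * (-m) * θ s ^ (-m-1) - A * ((T-s)⁻¹ * (ν+1) * Real.log (1/(T-s)) ^ ν)))
    · intro s hs
      rw [interior_Ico] at hs
      exact ((hgd s hs).add (hFd s hs)).hasDerivWithinAt
    · intro s hs
      rw [interior_Ico] at hs
      exact (hnn s hs).2
  have h0mem : (0:ℝ) ∈ Set.Ico (0:ℝ) T := ⟨le_refl _, hT0⟩
  have m1 : g 0 - F 0 ≤ g t - F t := mono1 h0mem ht ht.1
  have m2 : g 0 + F 0 ≤ g t + F t := mono2 h0mem ht ht.1
  have hg0 : 0 ≤ g 0 := by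
    have h9 := hLpos 0 h0mem
    show 0 ≤ Kc * Real.log (1/(T-0)) ^ (ν+1/2)
    have := Real.rpow_pos_of_pos h9 (ν+1/2)
    nlinarith [hKcpos]
  have hgtv : g t = Kc * Real.log (1/(T-t)) ^ (ν+1/2) := rfl
  have hFtv : F t = θ t ^ (-m) - A * Real.log (1/(T-t)) ^ (ν+1) := rfl
  have hF0v : F 0 = θ 0 ^ (-m) - A * Real.log (1/T) ^ (ν+1) := by
    rw [hF_def]; norm_num
  clear_value A Kc C₂ Km C₁ M F g
  -- bound on |F 0|
  have hlog0 : 0 < Real.log (1/T) := by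
    have := hLpos 0 h0mem
    rw [sub_zero] at this
    exact this
  have hF0 : |F 0| ≤ C₀ * Real.log (1/(T-t)) ^ (ν+1/2) := by
    have h1 : Real.log (1/T) ≤ Real.log (1/(T-t)) := by
      apply Real.log_le_log (by positivity)
      exact one_div_le_one_div_of_le hTt (by linarith [ht.1])
    have h2 : Real.log (1/T) ^ (ν+1/2) ≤ Real.log (1/(T-t)) ^ (ν+1/2) :=
      Real.rpow_le_rpow hlog0.le h1 (by linarith)
    have h3 : |F 0| ≤ C₀ * Real.log (1/T) ^ (ν+1/2) := by
      rw [hF0v]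
      exact hinit
    calc |F 0| ≤ C₀ * Real.log (1/T) ^ (ν+1/2) := h3
      _ ≤ C₀ * Real.log (1/(T-t)) ^ (ν+1/2) := mul_le_mul_of_nonneg_left h2 hC₀.le
  have hFt : |θ t ^ (-m) - A * Real.log (1/(T-t)) ^ (ν+1)|
      ≤ C₂ * Real.log (1/(T-t)) ^ (ν+1/2) := by
    rw [← hFtv]
    obtain ⟨hb1, hb2⟩ := abs_le.1 hF0
    have hC2X : C₂ * Real.log (1/(T-t)) ^ (ν+1/2)
        = C₀ * Real.log (1/(T-t)) ^ (ν+1/2) + Kc * Real.log (1/(T-t)) ^ (ν+1/2) := by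
      rw [hC₂_def]; ring
    rw [abs_le]
    constructor
    · linarith [m2, hg0, hb1, hC2X, hgtv]
    · linarith [m1, hg0, hb2, hC2X, hgtv]
  -- small relative error
  have hy0 : (0:ℝ) < Real.log (1/(T-t)) := hLpos t ht
  have hsmall : C₂ * Real.log (1/(T-t)) ^ (-(1/2) : ℝ) ≤ A/2 := by
    set y : ℝ := Real.log (1/(T-t)) with hy_def
    set z : ℝ := y ^ ((1/2) : ℝ) with hz_def
    have hz : 0 ≤ z := (Real.rpow_pos_of_pos hy0 _).le
    have hzsq : z ^ 2 = y := by
      rw [hz_def, ← Real.rpow_natCast (y ^ ((1/2):ℝ)) 2, ← Real.rpow_mul hy0.le]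
      norm_num
    clear_value z
    have hb0 : (0:ℝ) ≤ 2*C₂/A := (div_pos (mul_pos two_pos hC₂) hA).le
    have hsq : (2*C₂/A) ^ 2 ≤ z ^ 2 := by
      rw [hzsq]
      calc (2*C₂/A)^2 ≤ M := by rw [hM_def]; exact le_max_right _ _
        _ ≤ y := hLt
    have hys : 2*C₂/A ≤ z := le_of_pow_le_pow_left₀ (by norm_num) hz hsq
    have hzpos : 0 < z := lt_of_lt_of_le (div_pos (mul_pos two_pos hC₂) hA) hys
    have hinv : y ^ (-(1/2) : ℝ) = z⁻¹ := by
      rw [hz_def, ← Real.rpow_neg_one (y ^ ((1/2):ℝ)), ← Real.rpow_mul hy0.le]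
      norm_num
    rw [hinv]
    have h5 : z⁻¹ ≤ (2*C₂/A)⁻¹ := by
      rw [inv_eq_one_div, inv_eq_one_div]
      exact one_div_le_one_div_of_le (div_pos (mul_pos two_pos hC₂) hA) hys
    have h6 : C₂ * z⁻¹ ≤ C₂ * (2*C₂/A)⁻¹ := mul_le_mul_of_nonneg_left h5 hC₂.le
    have h7 : C₂ * (2*C₂/A)⁻¹ = A/2 := by field_simp
    linarith
  -- apply the inversion lemma
  have happ := invlem m A C₂ Km ν hm hA hC₂ hKm_def (θ t ^ (-m)) (Real.log (1/(T-t)))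
    (Real.rpow_pos_of_pos (hθpos t ht) _) hL1 hsmall hFt
  have hθeq : (θ t ^ (-m)) ^ (-(1/m) : ℝ) = θ t := by
    rw [← Real.rpow_mul (hθpos t ht).le, show (-m)*(-(1/m)) = 1 from by field_simp, Real.rpow_one]
  rw [hθeq, ← hC₁_def] at happ
  exact happ
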